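/- Minimality (Skorokhod) condition forces contact: let Y, L, U be càdlàg with L ≤ Y ≤ U on [0,T), let R = R⁺ − R⁻ be the Jordan decomposition of a finite-variation càdlàg process such that ∫₀ᵗ (Y_{s−} − L_{s−}) dR⁺_s = ∫₀ᵗ (U_{s−} − Y_{s−}) dR⁻_s = 0 for all t < T. If there exist sequences t_n ↗ T, s_n ↗ T with R⁺_{t_{n+1}} > R⁺_{t_n} and R⁻_{s_{n+1}} > R⁻_{s_n} for all n, then limsup_{s→T−} Y_s = U_{T−} and liminf_{s→T−} Y_s = L_{T−}; in particular L_{T−} = U_{T−} whenever both limits U_{T−}, L_{T−} exist. -/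

import Mathlib

open MeasureTheory Filter Set Topology Function ENNReal

/-- If `f` has left limits at every point of `(0, T]`, then `leftLim f` is
left-continuous at every point of `(0, T]`. -/
private lemma leftLim_tendsto_aux (T : ℝ) (f : ℝ → ℝ)
    (hf : ∀ s ∈ Set.Ioc (0:ℝ) T, ∃ l, Tendsto f (𝓝[<] s) (𝓝 l))
    {q : ℝ} (hq : q ∈ Set.Ioc (0:ℝ) T) :
    Tendsto (leftLim f) (𝓝[<] q) (𝓝 (leftLim f q)) := by
  obtain ⟨l, hl⟩ := hf q hq
  have hne : (𝓝[<] q) ≠ ⊥ := (inferInstance : Filter.NeBot _).ne'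
  rw [leftLim_eq_of_tendsto hl]
  rw [Metric.tendsto_nhdsWithin_nhds]
  intro ε hε
  have hev : ∀ᶠ x in 𝓝[<] q, dist (f x) l < ε / 2 :=
    hl (Metric.ball_mem_nhds l (by positivity))
  obtain ⟨c, hcq, hc⟩ := mem_nhdsLT_iff_exists_Ioo_subset.1 hev
  set c' := max c 0 with hc'def
  have hc'q : c' < q := max_lt hcq hq.1
  refine ⟨q - c', by linarith, ?_⟩
  intro y hy hdist
  have hyq : y < q := hy
  have hy1 : c' < y := by
    rw [Real.dist_eq, abs_lt] at hdist
    linarith [hdist.1]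
  have hy0 : (0:ℝ) < y := lt_of_le_of_lt (le_max_right c 0) hy1
  have hyT : y ≤ T := le_of_lt (lt_of_lt_of_le hyq hq.2)
  obtain ⟨ly, hly⟩ := hf y ⟨hy0, hyT⟩
  have hne' : (𝓝[<] y) ≠ ⊥ := (inferInstance : Filter.NeBot _).ne'
  rw [leftLim_eq_of_tendsto hly]
  have hIoo : Set.Ioo c' y ∈ 𝓝[<] y := Ioo_mem_nhdsLT_of_mem ⟨hy1, le_rfl⟩
  have hdistle : dist ly l ≤ ε / 2 := by
    refine le_of_tendsto (hly.dist (tendsto_const_nhds : Tendsto (fun _ : ℝ => l) _ _)) ?_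
    filter_upwards [hIoo] with x hx
    exact le_of_lt (hc ⟨lt_of_le_of_lt (le_max_left c 0) hx.1, lt_trans hx.2 hyq⟩)
  linarith

/-- If a nonnegative-part integral of a left-continuous `g` over `Ioc a b` vanishes while
the measure of `Ioc a b` is positive, then `g ≤ 0` somewhere on `Ioc a b`. -/
private lemma exists_contact (μ : Measure ℝ) (g : ℝ → ℝ) {a b : ℝ} (hab : a < b)
    (hg : ∀ q ∈ Set.Ioc a b, Tendsto g (𝓝[<] q) (𝓝 (g q)))
    (hint : ∫⁻ x in Set.Ioc a b, ENNReal.ofReal (g x) ∂μ = 0)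
    (hμ : μ (Set.Ioc a b) ≠ 0) : ∃ u ∈ Set.Ioc a b, g u ≤ 0 := by
  by_contra hcon
  push_neg at hcon
  set S : Set ℝ := {x | x ∈ Set.Icc a b ∧ μ (Set.Ioc x b) = 0} with hSdef
  have hSb : b ∈ S := ⟨⟨le_of_lt hab, le_rfl⟩, by simp⟩
  have hSne : S.Nonempty := ⟨b, hSb⟩
  have hbdd : BddBelow S := ⟨a, fun x hx => hx.1.1⟩
  set q := sInf S with hqdef
  have hqb : q ≤ b := csInf_le hbdd hSb
  have haq : a ≤ q := le_csInf hSne (fun x hx => hx.1.1)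
  -- (i) μ (Ioc q b) = 0
  have hμqb : μ (Set.Ioc q b) = 0 := by
    have hx : ∀ n : ℕ, ∃ x ∈ S, x < q + 1 / (n + 1) := by
      intro n
      refine exists_lt_of_csInf_lt hSne ?_
      have : (0:ℝ) < 1 / (n + 1) := by positivity
      linarith
    choose xs hxsS hxs using hx
    have hcover : Set.Ioc q b ⊆ ⋃ n : ℕ, Set.Ioc (xs n) b := by
      intro y hy
      obtain ⟨n, hn⟩ := exists_nat_one_div_lt (sub_pos.2 hy.1)
      have : xs n < y := by
        have := hxs n
        have h2 : (1:ℝ) / (n + 1) < y - q := hn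
        linarith
      exact Set.mem_iUnion.2 ⟨n, this, hy.2⟩
    refine le_antisymm ?_ (zero_le)
    calc μ (Set.Ioc q b) ≤ ∑' n : ℕ, μ (Set.Ioc (xs n) b) :=
          (measure_mono hcover).trans (measure_iUnion_le _)
      _ = 0 := by simp [fun n => (hxsS n).2]
  -- (ii) a < q
  have haq' : a < q := by
    rcases lt_or_eq_of_le haq with h | h
    · exact h
    · exact absurd (h ▸ hμqb) hμ
  have hqmem : q ∈ Set.Ioc a b := ⟨haq', hqb⟩
  have hgq : 0 < g q := hcon q hqmem
  -- left-continuity of g at q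
  have hev : ∀ᶠ y in 𝓝[<] q, g q / 2 < g y :=
    (hg q hqmem).eventually_const_lt (half_lt_self hgq)
  obtain ⟨c, hcq, hc⟩ := mem_nhdsLT_iff_exists_Ioo_subset.1 hev
  set c' := max c a with hc'def
  have hc'q : c' < q := max_lt hcq haq'
  have hc'a : a ≤ c' := le_max_right c a
  -- (iv) μ (Ioc c' q) ≠ 0
  have hμc'q : μ (Set.Ioc c' q) ≠ 0 := by
    intro h0
    have hsub : Set.Ioc c' b ⊆ Set.Ioc c' q ∪ Set.Ioc q b := by
      intro y hy
      rcases le_or_gt y q with h | h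
      · exact Or.inl ⟨hy.1, h⟩
      · exact Or.inr ⟨h, hy.2⟩
    have : μ (Set.Ioc c' b) = 0 := by
      refine le_antisymm ?_ (zero_le)
      calc μ (Set.Ioc c' b) ≤ μ (Set.Ioc c' q) + μ (Set.Ioc q b) :=
            (measure_mono hsub).trans (measure_union_le _ _)
        _ = 0 := by rw [h0, hμqb, add_zero]
    have hc'S : c' ∈ S := ⟨⟨hc'a, le_of_lt (lt_of_lt_of_le hc'q hqb)⟩, this⟩
    exact absurd (csInf_le hbdd hc'S) (not_le.2 hc'q)
  -- (v)+(vi): lower bound the integral on Ioc c' q and contradict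
  have hlow : ENNReal.ofReal (g q / 2) * μ (Set.Ioc c' q)
      ≤ ∫⁻ x in Set.Ioc c' q, ENNReal.ofReal (g x) ∂μ := by
    rw [← setLIntegral_const (Set.Ioc c' q) (ENNReal.ofReal (g q / 2))]
    refine lintegral_mono_ae ?_
    rw [ae_restrict_iff' measurableSet_Ioc]
    refine ae_of_all _ (fun x hx => ENNReal.ofReal_le_ofReal ?_)
    rcases lt_or_eq_of_le hx.2 with h | h
    · exact le_of_lt (hc ⟨lt_of_le_of_lt (le_max_left c a) hx.1, h⟩)
    · rw [h]; linarith
  have hup : ∫⁻ x in Set.Ioc c' q, ENNReal.ofReal (g x) ∂μ = 0 := by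
    refine le_antisymm ?_ (zero_le)
    calc ∫⁻ x in Set.Ioc c' q, ENNReal.ofReal (g x) ∂μ
        ≤ ∫⁻ x in Set.Ioc a b, ENNReal.ofReal (g x) ∂μ :=
          lintegral_mono' (Measure.restrict_mono (Set.Ioc_subset_Ioc hc'a hqb) le_rfl) le_rfl
      _ = 0 := hint
  rw [hup] at hlow
  have h1 : ENNReal.ofReal (g q / 2) ≠ 0 := by
    simp only [ne_eq, ENNReal.ofReal_eq_zero, not_le]
    linarith
  have := le_antisymm hlow (zero_le)
  rcases mul_eq_zero.1 this with h | h
  · exact h1 h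
  · exact hμc'q h

/-- The key contact estimate: it yields `lA ≤ lB` from the annihilation of
`leftLim A - leftLim B` by a Stieltjes measure that keeps increasing up to `T`. -/
private lemma contact_aux (T : ℝ) (hT : 0 < T) (A B : ℝ → ℝ) (lA lB : ℝ)
    (hA : Tendsto A (𝓝[<] T) (𝓝 lA)) (hB : Tendsto B (𝓝[<] T) (𝓝 lB))
    (hAl : ∀ s ∈ Set.Ioc (0:ℝ) T, ∃ l, Tendsto A (𝓝[<] s) (𝓝 l))
    (hBl : ∀ s ∈ Set.Ioc (0:ℝ) T, ∃ l, Tendsto B (𝓝[<] s) (𝓝 l))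
    (R : StieltjesFunction ℝ)
    (hskor : ∀ t ∈ Set.Ico (0:ℝ) T,
      ∫⁻ s in Set.Ioc 0 t, ENNReal.ofReal (leftLim A s - leftLim B s) ∂(R.measure) = 0)
    (sn : ℕ → ℝ) (hsnT : ∀ n, 0 ≤ sn n ∧ sn n < T) (hsnlim : Tendsto sn atTop (𝓝 T))
    (hR : ∀ n, R (sn n) < R (sn (n + 1))) : lA ≤ lB := by
  refine le_of_forall_pos_le_add (fun ε hε => ?_)
  have hevA : ∀ᶠ x in 𝓝[<] T, dist (A x) lA < ε / 2 :=
    hA (Metric.ball_mem_nhds lA (by positivity))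
  have hevB : ∀ᶠ x in 𝓝[<] T, dist (B x) lB < ε / 2 :=
    hB (Metric.ball_mem_nhds lB (by positivity))
  obtain ⟨c, hcT, hc⟩ := mem_nhdsLT_iff_exists_Ioo_subset.1 (hevA.and hevB)
  set c' := max c 0 with hc'def
  have hc'T : c' < T := max_lt hcT hT
  obtain ⟨n, hn⟩ := (hsnlim.eventually_const_lt hc'T).exists
  set a := sn n with hadef
  set b := sn (n + 1) with hbdef
  have hab : a < b := by
    by_contra h
    exact absurd (R.mono (not_lt.1 h)) (not_le.2 (hR n))
  have ha0 : (0:ℝ) ≤ a := (hsnT n).1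
  have hbT : b < T := (hsnT (n + 1)).2
  have hμab : R.measure (Set.Ioc a b) ≠ 0 := by
    rw [R.measure_Ioc]
    simp only [ne_eq, ENNReal.ofReal_eq_zero, not_le]
    linarith [hR n]
  have hint0 : ∫⁻ x in Set.Ioc a b,
      ENNReal.ofReal (leftLim A x - leftLim B x) ∂(R.measure) = 0 := by
    refine le_antisymm ?_ (zero_le)
    calc ∫⁻ x in Set.Ioc a b, ENNReal.ofReal (leftLim A x - leftLim B x) ∂(R.measure)
        ≤ ∫⁻ x in Set.Ioc 0 b, ENNReal.ofReal (leftLim A x - leftLim B x) ∂(R.measure) :=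
          lintegral_mono' (Measure.restrict_mono (Set.Ioc_subset_Ioc_left ha0) le_rfl) le_rfl
      _ = 0 := hskor b ⟨(hsnT (n + 1)).1, hbT⟩
  have hgcont : ∀ x ∈ Set.Ioc a b,
      Tendsto (fun s => leftLim A s - leftLim B s) (𝓝[<] x)
        (𝓝 (leftLim A x - leftLim B x)) := by
    intro x hx
    have hx' : x ∈ Set.Ioc (0:ℝ) T :=
      ⟨lt_of_le_of_lt ha0 hx.1, le_of_lt (lt_of_le_of_lt hx.2 hbT)⟩
    exact (leftLim_tendsto_aux T A hAl hx').sub (leftLim_tendsto_aux T B hBl hx')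
  obtain ⟨u, hu, hgu⟩ := exists_contact R.measure _ hab hgcont hint0 hμab
  -- now estimate the left limits of A and B at u
  have hu' : u ∈ Set.Ioc (0:ℝ) T :=
    ⟨lt_of_le_of_lt ha0 hu.1, le_of_lt (lt_of_le_of_lt hu.2 hbT)⟩
  obtain ⟨lAu, hlAu⟩ := hAl u hu'
  obtain ⟨lBu, hlBu⟩ := hBl u hu'
  have hne : (𝓝[<] u) ≠ ⊥ := (inferInstance : Filter.NeBot _).ne'
  rw [leftLim_eq_of_tendsto hlAu, leftLim_eq_of_tendsto hlBu] at hgu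
  have hc'u : c' < u := lt_trans hn hu.1
  have hIoo : Set.Ioo c' u ∈ 𝓝[<] u := Ioo_mem_nhdsLT_of_mem ⟨hc'u, le_rfl⟩
  have hmem : ∀ x ∈ Set.Ioo c' u, x ∈ Set.Ioo c T := by
    intro x hx
    exact ⟨lt_of_le_of_lt (le_max_left c 0) hx.1,
      lt_of_lt_of_le hx.2 (le_of_lt (lt_of_le_of_lt hu.2 hbT))⟩
  have hAge : lA - ε / 2 ≤ lAu := by
    refine ge_of_tendsto hlAu ?_
    filter_upwards [hIoo] with x hx
    have := (hc (hmem x hx)).1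
    rw [Real.dist_eq, abs_lt] at this
    linarith [this.1]
  have hBle : lBu ≤ lB + ε / 2 := by
    refine le_of_tendsto hlBu ?_
    filter_upwards [hIoo] with x hx
    have := (hc (hmem x hx)).2
    rw [Real.dist_eq, abs_lt] at this
    linarith [this.2]
  linarith

/-- the minimality (Skorokhod) condition forces contact of the
barriers.  This is the pathwise lemma from the proof of Theorem 5.2: `Y` lies
between `L` and `U` on `[0,T)`, the Stieltjes measures of `R⁺` and `R⁻`
annihilate `Y_{−} − L_{−}` and `U_{−} − Y_{−}` respectively, and both `R⁺` and
`R⁻` keep increasing up to `T`; then `limsup_{s→T−} Y = U_{T−}` and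
`liminf_{s→T−} Y = L_{T−}`, and in particular `L_{T−} = U_{T−}` whenever the
left limit of `Y` at `T` exists. -/
theorem skorokhod_minimality_forces_contact (T : ℝ) (hT : 0 < T)
    (Y L U : ℝ → ℝ)
    (hbar : ∀ t ∈ Set.Ico (0:ℝ) T, L t ≤ Y t ∧ Y t ≤ U t)
    (hYl : ∀ s ∈ Set.Ioc (0:ℝ) T, ∃ l, Tendsto Y (𝓝[<] s) (𝓝 l))
    (hLl : ∀ s ∈ Set.Ioc (0:ℝ) T, ∃ l, Tendsto L (𝓝[<] s) (𝓝 l))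
    (hUl : ∀ s ∈ Set.Ioc (0:ℝ) T, ∃ l, Tendsto U (𝓝[<] s) (𝓝 l))
    (Rp Rn : StieltjesFunction ℝ)
    (hskorL : ∀ t ∈ Set.Ico (0:ℝ) T,
      ∫⁻ s in Set.Ioc 0 t,
        ENNReal.ofReal (leftLim Y s - leftLim L s) ∂(Rp.measure) = 0)
    (hskorU : ∀ t ∈ Set.Ico (0:ℝ) T,
      ∫⁻ s in Set.Ioc 0 t,
        ENNReal.ofReal (leftLim U s - leftLim Y s) ∂(Rn.measure) = 0)
    (tn sn : ℕ → ℝ)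
    (htn : ∀ n, tn n ≤ tn (n + 1)) (htnT : ∀ n, 0 ≤ tn n ∧ tn n < T)
    (htnlim : Tendsto tn atTop (𝓝 T))
    (hsn : ∀ n, sn n ≤ sn (n + 1)) (hsnT : ∀ n, 0 ≤ sn n ∧ sn n < T)
    (hsnlim : Tendsto sn atTop (𝓝 T))
    (hRp : ∀ n, Rp (tn n) < Rp (tn (n + 1)))
    (hRn : ∀ n, Rn (sn n) < Rn (sn (n + 1))) :
    limsup Y (𝓝[<] T) = leftLim U T ∧
    liminf Y (𝓝[<] T) = leftLim L T ∧
    ((∃ l, Tendsto Y (𝓝[<] T) (𝓝 l)) → leftLim L T = leftLim U T) := by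
  have hTmem : T ∈ Set.Ioc (0:ℝ) T := ⟨hT, le_rfl⟩
  obtain ⟨lY, hlY⟩ := hYl T hTmem
  obtain ⟨lL, hlL⟩ := hLl T hTmem
  obtain ⟨lU, hlU⟩ := hUl T hTmem
  have hne : (𝓝[<] T) ≠ ⊥ := (inferInstance : Filter.NeBot _).ne'
  have eY : leftLim Y T = lY := leftLim_eq_of_tendsto hlY
  have eL : leftLim L T = lL := leftLim_eq_of_tendsto hlL
  have eU : leftLim U T = lU := leftLim_eq_of_tendsto hlU
  have hIoo : Set.Ioo (0:ℝ) T ∈ 𝓝[<] T := Ioo_mem_nhdsLT_of_mem ⟨hT, le_rfl⟩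
  have hYleU : lY ≤ lU := by
    refine le_of_tendsto_of_tendsto hlY hlU ?_
    filter_upwards [hIoo] with x hx
    exact (hbar x ⟨le_of_lt hx.1, hx.2⟩).2
  have hLleY : lL ≤ lY := by
    refine le_of_tendsto_of_tendsto hlL hlY ?_
    filter_upwards [hIoo] with x hx
    exact (hbar x ⟨le_of_lt hx.1, hx.2⟩).1
  have hUleY : lU ≤ lY :=
    contact_aux T hT U Y lU lY hlU hlY hUl hYl Rn hskorU sn hsnT hsnlim hRn
  have hYleL : lY ≤ lL :=
    contact_aux T hT Y L lY lL hlY hlL hYl hLl Rp hskorL tn htnT htnlim hRp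
  have hYU : lY = lU := le_antisymm hYleU hUleY
  have hYL : lY = lL := le_antisymm hYleL hLleY
  refine ⟨?_, ?_, ?_⟩
  · rw [hlY.limsup_eq, eU, hYU]
  · rw [hlY.liminf_eq, eL, hYL]
  · intro _
    rw [eL, eU, ← hYU, ← hYL]
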